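/- Let S ⊆ ℝ be an open interval, let F : ℝ → [0,1] be a twice continuously differentiable CDF with derivative f = F′ satisfying f(x) > 0 for all x ∈ S and F(S) = (0,1), and let F_h : ℝ → [0,1] be a twice continuously differentiable CDF with derivative f_h. Define the critical value cv(p) = F⁻¹(1−p) for p ∈ (0,1) and the rejection rate β(p) = 1 − F_h(cv(p)). If f_h′(x)·f(x) ≥ f′(x)·f_h(x) for all x ∈ S, then β is twice continuously differentiable on (0,1) with β″(p) ≤ 0 for all p ∈ (0,1); in particular, β is concave on (0,1). -/

import Mathlib

open Set Filter Topology

/-- Let S be an open interval, F a twice continuously differentiable CDF with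
density f = F′ positive on S and F(S) = (0,1), and F_h a twice continuously differentiable
CDF with density f_h. Let cv(p) = F⁻¹(1−p) ∈ S for p ∈ (0,1) and β(p) = 1 − F_h(cv(p)).
If f_h′(x)·f(x) ≥ f′(x)·f_h(x) for all x ∈ S, then β is twice continuously differentiable
on (0,1) with β″(p) ≤ 0 there; in particular β is concave on (0,1). -/
theorem stmt_0
    (S : Set ℝ) (hS_open : IsOpen S) (hS_conn : S.OrdConnected)
    (F Fh : ℝ → ℝ)
    (hF_smooth : ContDiff ℝ 2 F)
    (hF_mono : Monotone F)
    (hF_bot : Tendsto F atBot (𝓝 0)) (hF_top : Tendsto F atTop (𝓝 1))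
    (hf_pos : ∀ x ∈ S, 0 < deriv F x)
    (hFS : F '' S = Ioo 0 1)
    (hFh_smooth : ContDiff ℝ 2 Fh)
    (hFh_mono : Monotone Fh)
    (hFh_bot : Tendsto Fh atBot (𝓝 0)) (hFh_top : Tendsto Fh atTop (𝓝 1))
    (cv : ℝ → ℝ)
    (hcv_mem : ∀ p ∈ Ioo (0 : ℝ) 1, cv p ∈ S)
    (hcv_eq : ∀ p ∈ Ioo (0 : ℝ) 1, F (cv p) = 1 - p)
    (hMLR : ∀ x ∈ S, deriv (deriv Fh) x * deriv F x ≥ deriv (deriv F) x * deriv Fh x)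
    (β : ℝ → ℝ) (hβ : ∀ p, β p = 1 - Fh (cv p)) :
    ContDiffOn ℝ 2 β (Ioo 0 1) ∧
    (∀ p ∈ Ioo (0 : ℝ) 1, deriv (deriv β) p ≤ 0) ∧
    ConcaveOn ℝ (Ioo 0 1) β := by
  have hn1 : (2 : WithTop ℕ∞) ≠ 0 := by norm_num
  have hβfun : β = fun p => 1 - Fh (cv p) := funext hβ
  have hSconv : Convex ℝ S := convex_iff_ordConnected.mpr hS_conn
  have hFdiff : Differentiable ℝ F := hF_smooth.differentiable hn1
  have hFhdiff : Differentiable ℝ Fh := hFh_smooth.differentiable hn1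
  have hFstrict : StrictMonoOn F S :=
    strictMonoOn_of_deriv_pos hSconv hF_smooth.continuous.continuousOn
      (fun x hx => hf_pos x (by rwa [hS_open.interior_eq] at hx))
  -- C¹-ness of the derivatives
  have hF' : ContDiff ℝ 1 (deriv F) := by
    have h2 : ContDiff ℝ ((1:ℕ) + 1) F := by exact_mod_cast hF_smooth
    exact (contDiff_succ_iff_deriv.mp h2).2.2
  have hFh' : ContDiff ℝ 1 (deriv Fh) := by
    have h2 : ContDiff ℝ ((1:ℕ) + 1) Fh := by exact_mod_cast hFh_smooth
    exact (contDiff_succ_iff_deriv.mp h2).2.2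
  -- key: smoothness and derivative of cv
  have key : ∀ p₀ ∈ Ioo (0:ℝ) 1, ContDiffAt ℝ 2 cv p₀ ∧
      HasDerivAt cv (-(deriv F (cv p₀))⁻¹) p₀ := by
    intro p₀ hp₀
    have hx₀ : cv p₀ ∈ S := hcv_mem p₀ hp₀
    have hc : 0 < deriv F (cv p₀) := hf_pos _ hx₀
    have hF2 : ContDiffAt ℝ 2 F (cv p₀) := hF_smooth.contDiffAt
    have hFd0 : HasDerivAt F (deriv F (cv p₀)) (cv p₀) :=
      (hFdiff (cv p₀)).hasDerivAt
    have hFd : HasFDerivAt F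
        ((ContinuousLinearEquiv.unitsEquivAut ℝ (Units.mk0 _ hc.ne')) : ℝ →L[ℝ] ℝ) (cv p₀) :=
      hFd0.hasFDerivAt_equiv hc.ne'
    set g := hF2.localInverse hFd hn1 with hgdef
    have hgC : ContDiffAt ℝ 2 g (F (cv p₀)) := hF2.to_localInverse hFd hn1
    have hgx : g (F (cv p₀)) = cv p₀ := hF2.localInverse_apply_image hFd hn1
    have hright : ∀ᶠ y in 𝓝 (F (cv p₀)), F (g y) = y :=
      (hF2.hasStrictFDerivAt' hFd hn1).eventually_right_inverse
    have hmap : Tendsto (fun p : ℝ => 1 - p) (𝓝 p₀) (𝓝 (F (cv p₀))) := by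
      rw [hcv_eq p₀ hp₀]
      exact (continuous_const.sub continuous_id).tendsto p₀
    have hev1 : ∀ᶠ p in 𝓝 p₀, F (g (1 - p)) = 1 - p := hmap.eventually hright
    have hgtend : Tendsto (fun p => g (1 - p)) (𝓝 p₀) (𝓝 (cv p₀)) := by
      have := hgC.continuousAt.tendsto.comp hmap
      rwa [hgx] at this
    have hev2 : ∀ᶠ p in 𝓝 p₀, g (1 - p) ∈ S := hgtend.eventually_mem (hS_open.mem_nhds hx₀)
    have hev3 : ∀ᶠ p in 𝓝 p₀, p ∈ Ioo (0:ℝ) 1 := isOpen_Ioo.mem_nhds hp₀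
    have hcv_ev : cv =ᶠ[𝓝 p₀] fun p => g (1 - p) := by
      filter_upwards [hev1, hev2, hev3] with p h1 h2 h3
      exact hFstrict.injOn (hcv_mem p h3) h2 (by rw [hcv_eq p h3, h1])
    have hgC' : ContDiffAt ℝ 2 (fun p : ℝ => g (1 - p)) p₀ := by
      refine ContDiffAt.comp p₀ ?_ (contDiffAt_const.sub contDiffAt_id)
      rwa [hcv_eq p₀ hp₀] at hgC
    have hcvC : ContDiffAt ℝ 2 cv p₀ := hgC'.congr_of_eventuallyEq hcv_ev
    have hcv' : HasDerivAt cv (deriv cv p₀) p₀ := (hcvC.differentiableAt hn1).hasDerivAt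
    have hFcv : HasDerivAt (fun p => F (cv p)) (deriv F (cv p₀) * deriv cv p₀) p₀ :=
      hFd0.comp p₀ hcv'
    have heq : (fun p => F (cv p)) =ᶠ[𝓝 p₀] fun p => 1 - p := by
      filter_upwards [hev3] with p hp; exact hcv_eq p hp
    have hlin : HasDerivAt (fun p : ℝ => 1 - p) (-1) p₀ := by
      simpa using (hasDerivAt_id p₀).const_sub (1:ℝ)
    have huniq : deriv F (cv p₀) * deriv cv p₀ = -1 :=
      hFcv.unique (hlin.congr_of_eventuallyEq heq)
    have hcne : deriv F (cv p₀) ≠ 0 := hc.ne'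
    have hdval : deriv cv p₀ = -(deriv F (cv p₀))⁻¹ := by
      field_simp
      linear_combination huniq
    exact ⟨hcvC, hdval ▸ hcv'⟩
  -- derivative of β
  have key2 : ∀ p ∈ Ioo (0:ℝ) 1,
      HasDerivAt β (deriv Fh (cv p) / deriv F (cv p)) p := by
    intro p hp
    obtain ⟨-, hcv'⟩ := key p hp
    have hc : 0 < deriv F (cv p) := hf_pos _ (hcv_mem p hp)
    have h1 : HasDerivAt (fun q => Fh (cv q))
        (deriv Fh (cv p) * (-(deriv F (cv p))⁻¹)) p :=
      ((hFhdiff (cv p)).hasDerivAt).comp p hcv'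
    have h2 : HasDerivAt β (0 - deriv Fh (cv p) * (-(deriv F (cv p))⁻¹)) p := by
      rw [hβfun]; exact (hasDerivAt_const p (1:ℝ)).sub h1
    convert h2 using 1
    have hcne : deriv F (cv p) ≠ 0 := hc.ne'
    field_simp
    ring
  set φ : ℝ → ℝ := fun p => deriv Fh (cv p) / deriv F (cv p) with hφdef
  have hφev : ∀ p₀ ∈ Ioo (0:ℝ) 1, deriv β =ᶠ[𝓝 p₀] φ := by
    intro p₀ hp₀
    exact Filter.eventually_of_mem (isOpen_Ioo.mem_nhds hp₀)
      (fun p hp => (key2 p hp).deriv)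
  -- second derivative of β via φ
  have key3 : ∀ p ∈ Ioo (0:ℝ) 1, HasDerivAt φ
      (((deriv (deriv Fh) (cv p) * deriv F (cv p) -
          deriv Fh (cv p) * deriv (deriv F) (cv p)) / (deriv F (cv p)) ^ 2) *
        (-(deriv F (cv p))⁻¹)) p := by
    intro p hp
    obtain ⟨-, hcv'⟩ := key p hp
    have hcne : deriv F (cv p) ≠ 0 := (hf_pos _ (hcv_mem p hp)).ne'
    have hq : HasDerivAt (fun x => deriv Fh x / deriv F x)
        ((deriv (deriv Fh) (cv p) * deriv F (cv p) -
          deriv Fh (cv p) * deriv (deriv F) (cv p)) / (deriv F (cv p)) ^ 2) (cv p) :=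
      HasDerivAt.div ((hFh'.differentiable one_ne_zero _).hasDerivAt)
        ((hF'.differentiable one_ne_zero _).hasDerivAt) hcne
    exact hq.comp p hcv'
  have hsec : ∀ p ∈ Ioo (0:ℝ) 1, deriv (deriv β) p ≤ 0 := by
    intro p hp
    have hc : 0 < deriv F (cv p) := hf_pos _ (hcv_mem p hp)
    have hdd : deriv (deriv β) p = deriv φ p := (hφev p hp).deriv_eq
    rw [hdd, (key3 p hp).deriv]
    have hnum : 0 ≤ deriv (deriv Fh) (cv p) * deriv F (cv p) -
        deriv Fh (cv p) * deriv (deriv F) (cv p) := by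
      nlinarith [hMLR (cv p) (hcv_mem p hp)]
    exact mul_nonpos_of_nonneg_of_nonpos (div_nonneg hnum (sq_nonneg _))
      (neg_nonpos.mpr (inv_nonneg.mpr hc.le))
  have hCD : ContDiffOn ℝ 2 β (Ioo 0 1) := by
    intro p hp
    have : ContDiffAt ℝ 2 β p := by
      rw [hβfun]
      exact contDiffAt_const.sub (hFh_smooth.contDiffAt.comp p (key p hp).1)
    exact this.contDiffWithinAt
  refine ⟨hCD, hsec, ?_⟩
  have hint : interior (Ioo (0:ℝ) 1) = Ioo 0 1 := isOpen_Ioo.interior_eq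
  refine concaveOn_of_deriv2_nonpos (convex_Ioo 0 1) hCD.continuousOn ?_ ?_ ?_
  · rw [hint]; exact hCD.differentiableOn hn1
  · rw [hint]
    intro p hp
    exact (((hφev p hp).differentiableAt_iff).mpr (key3 p hp).differentiableAt).differentiableWithinAt
  · rw [hint]
    intro p hp
    have h2 : deriv^[2] β p = deriv (deriv β) p := by
      simp [Function.iterate_succ, Function.comp]
    rw [h2]; exact hsec p hp
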